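/- Let G be a Hausdorff topological group and let S be a set of Radon probability measures on G which is closed under convolution and regular, i.e., for every μ ∈ S there is ν ∈ S with μ∗ν∗μ = μ. Then S is an inverse semigroup: every μ ∈ S has a unique inverse in S (a unique ν ∈ S with μ∗ν∗μ = μ and ν∗μ∗ν = ν), and any two idempotents e, f ∈ S (e∗e = e, f∗f = f) commute: e∗f = f∗e. -/

import Mathlib

open MeasureTheory Set Pointwise Topology
set_option linter.unusedSectionVars false

/-- A Radon probability measure: a Borel probability measure such that for every `ε > 0`
there is a compact set of measure `> 1 - ε`. -/
def IsRadonProb {G : Type*} [TopologicalSpace G] [MeasurableSpace G]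
    (μ : Measure G) : Prop :=
  μ Set.univ = 1 ∧ ∀ ε : ℝ, 0 < ε → ∃ K : Set G, IsCompact K ∧ 1 - ENNReal.ofReal ε < μ K

/-- Convolution of measures: the pushforward of the product measure under multiplication. -/
noncomputable def mconv {G : Type*} [MeasurableSpace G] [Mul G]
    (μ ν : Measure G) : Measure G :=
  (μ.prod ν).map (fun p : G × G => p.1 * p.2)

/-- The support of a measure: all points whose every open neighbourhood has positive measure. -/
def msupport {G : Type*} [TopologicalSpace G] [MeasurableSpace G] (μ : Measure G) : Set G :=
  {x | ∀ U : Set G, IsOpen U → x ∈ U → 0 < μ U}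

/-- The space of Radon probability measures on `G`. -/
def PM (G : Type*) [TopologicalSpace G] [MeasurableSpace G] : Type _ :=
  {μ : Measure G // IsRadonProb μ}

/-- The weak topology on `PM G`, generated by the sub-basic sets `{μ | μ U > a}`
for `U ⊆ G` open and `a : ℝ`. -/
instance PM.topologicalSpace (G : Type*) [TopologicalSpace G] [MeasurableSpace G] :
    TopologicalSpace (PM G) :=
  TopologicalSpace.generateFrom
    {s | ∃ (U : Set G) (a : ℝ), IsOpen U ∧ s = {μ : PM G | ENNReal.ofReal a < μ.1 U}}

lemma integrable_of_bdd {α : Type*} [MeasurableSpace α] {μ : Measure α} [IsFiniteMeasure μ]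
    {f : α → ℝ} (hf : Measurable f) (C : ℝ) (hb : ∀ x, |f x| ≤ C) : Integrable f μ :=
  Integrable.mono' (integrable_const C) hf.aestronglyMeasurable (Filter.Eventually.of_forall hb)

section Basic
variable {G : Type*} [Monoid G] [MeasurableSpace G] [MeasurableMul₂ G]

instance mconv_prob (μ ν : Measure G) [IsProbabilityMeasure μ] [IsProbabilityMeasure ν] :
    IsProbabilityMeasure (mconv μ ν) :=
  Measure.isProbabilityMeasure_map measurable_mul.aemeasurable

lemma integral_mconv {μ ν : Measure G} [IsProbabilityMeasure μ] [IsProbabilityMeasure ν]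
    {f : G → ℝ} (hf : Measurable f) (C : ℝ) (hb : ∀ x, |f x| ≤ C) :
    ∫ z, f z ∂(mconv μ ν) = ∫ x, ∫ y, f (x * y) ∂ν ∂μ := by
  rw [mconv, integral_map measurable_mul.aemeasurable hf.aestronglyMeasurable]
  exact integral_prod _ (integrable_of_bdd (hf.comp measurable_mul) C (fun z => hb _))

lemma integral_mconv' {μ ν : Measure G} [IsProbabilityMeasure μ] [IsProbabilityMeasure ν]
    {f : G → ℝ} (hf : Measurable f) (C : ℝ) (hb : ∀ x, |f x| ≤ C) :
    ∫ z, f z ∂(mconv μ ν) = ∫ y, ∫ x, f (x * y) ∂μ ∂ν := by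
  rw [integral_mconv hf C hb]
  exact integral_integral_swap (integrable_of_bdd (μ := μ.prod ν)
    (hf.comp measurable_mul) C (fun z => hb _))

/-- Jensen: for a probability measure, `(∫ φ)² ≤ ∫ φ²`. -/
lemma sq_integral_le {α : Type*} [MeasurableSpace α] (μ : Measure α) [IsProbabilityMeasure μ]
    {φ : α → ℝ} (hφ : Measurable φ) (C : ℝ) (hb : ∀ x, |φ x| ≤ C) :
    (∫ x, φ x ∂μ) ^ 2 ≤ ∫ x, (φ x) ^ 2 ∂μ := by
  have h1 : Integrable φ μ := integrable_of_bdd hφ C hb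
  have h2 : Integrable (fun x => (φ x) ^ 2) μ :=
    integrable_of_bdd (hφ.pow_const 2) (C ^ 2) (fun x => by
      rw [abs_pow]; exact pow_le_pow_left₀ (abs_nonneg _) (hb x) 2)
  set c := ∫ x, φ x ∂μ with hc
  have key : 0 ≤ ∫ x, (φ x - c) ^ 2 ∂μ :=
    integral_nonneg (fun x => sq_nonneg _)
  have expand : ∫ x, (φ x - c) ^ 2 ∂μ = (∫ x, (φ x) ^ 2 ∂μ) - c ^ 2 := by
    have : (fun x => (φ x - c) ^ 2) = fun x => (φ x) ^ 2 - (2 * c) * φ x + c ^ 2 := by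
      funext x; ring
    have hsub : Integrable (fun x => φ x ^ 2 - 2 * c * φ x) μ := by
      exact h2.sub (h1.const_mul (2 * c))
    have hcm : Integrable (fun x => 2 * c * φ x) μ := h1.const_mul (2 * c)
    rw [this, integral_add hsub (integrable_const _),
      integral_sub h2 hcm, MeasureTheory.integral_const_mul, integral_const]
    simp [← hc]
    ring
  linarith [key, expand.symm ▸ key]
lemma mconv_assoc (μ ν ρ : Measure G) [SFinite μ] [SFinite ν] [SFinite ρ] :
    mconv (mconv μ ν) ρ = mconv μ (mconv ν ρ) := by
  have e1 := Measure.map_prod_map (f := fun p : G × G => p.1 * p.2) (g := (id : G → G))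
    (μ.prod ν) ρ measurable_mul measurable_id
  rw [Measure.map_id] at e1
  have e2 := Measure.map_prod_map (f := (id : G → G)) (g := fun p : G × G => p.1 * p.2)
    μ (ν.prod ρ) measurable_id measurable_mul
  rw [Measure.map_id] at e2
  have h1 : mconv (mconv μ ν) ρ
      = ((μ.prod ν).prod ρ).map (fun p : (G × G) × G => p.1.1 * p.1.2 * p.2) := by
    rw [mconv, mconv, e1, Measure.map_map measurable_mul
      (measurable_mul.prodMap measurable_id)]
    rfl
  have h2 : mconv μ (mconv ν ρ)
      = (μ.prod (ν.prod ρ)).map (fun p : G × (G × G) => p.1 * (p.2.1 * p.2.2)) := by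
    rw [mconv, mconv, e2, Measure.map_map measurable_mul
      (measurable_id.prodMap measurable_mul)]
    rfl
  rw [h1, h2, ← Measure.prodAssoc_prod, Measure.map_map
    (show Measurable (fun p : G × (G × G) => p.1 * (p.2.1 * p.2.2)) by fun_prop)
    MeasurableEquiv.prodAssoc.measurable]
  congr 1
  ext p
  simp [MeasurableEquiv.prodAssoc, mul_assoc]
end Basic

section Star
variable {G : Type*} [Group G] [MeasurableSpace G] [MeasurableMul₂ G] [MeasurableInv G]

/-- The right-translation averaging operator. -/
noncomputable def Trt (α : Measure G) (φ : G → ℝ) : G → ℝ := fun x => ∫ y, φ (x * y) ∂α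

lemma Trt_meas {α : Measure G} [SFinite α] {φ : G → ℝ} (hφ : Measurable φ) :
    Measurable (Trt α φ) := by
  have : StronglyMeasurable (fun z : G × G => φ (z.1 * z.2)) :=
    (hφ.comp measurable_mul).stronglyMeasurable
  exact this.integral_prod_right'.measurable

lemma Trt_bdd {α : Measure G} [IsProbabilityMeasure α] {φ : G → ℝ} (C : ℝ)
    (hb : ∀ x, |φ x| ≤ C) : ∀ x, |Trt α φ x| ≤ C := by
  intro x
  have h := norm_integral_le_of_norm_le_const (μ := α) (f := fun y => φ (x * y)) (C := C)
    (Filter.Eventually.of_forall fun y => by rw [Real.norm_eq_abs]; exact hb _)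
  rw [Real.norm_eq_abs] at h
  simpa [Trt] using h

lemma Trt_comp {α β : Measure G} [IsProbabilityMeasure α] [IsProbabilityMeasure β]
    {φ : G → ℝ} (hφ : Measurable φ) (C : ℝ) (hb : ∀ x, |φ x| ≤ C) :
    Trt α (Trt β φ) = Trt (mconv α β) φ := by
  funext x
  have := integral_mconv (μ := α) (ν := β) (f := fun w => φ (x * w))
    (hφ.comp (measurable_const_mul x)) C (fun w => hb _)
  simp only [Trt, this]
  congr 1; funext y; congr 1; funext z; rw [mul_assoc]

lemma Trt_contraction {α g : Measure G} [IsProbabilityMeasure α] [IsProbabilityMeasure g]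
    (h : mconv g α = g) {φ : G → ℝ} (hφ : Measurable φ) (C : ℝ) (hb : ∀ x, |φ x| ≤ C) :
    ∫ x, (Trt α φ x) ^ 2 ∂g ≤ ∫ x, (φ x) ^ 2 ∂g := by
  have hφ2 : Measurable fun x => (φ x) ^ 2 := hφ.pow_const 2
  have hb2 : ∀ x, |(φ x) ^ 2| ≤ C ^ 2 := fun x => by
    rw [abs_pow]; exact pow_le_pow_left₀ (abs_nonneg _) (hb x) 2
  have key : ∫ z, (φ z) ^ 2 ∂(mconv g α) = ∫ x, Trt α (fun z => (φ z) ^ 2) x ∂g :=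
    integral_mconv hφ2 (C ^ 2) hb2
  rw [h] at key
  rw [key]
  apply integral_mono
  · exact integrable_of_bdd ((Trt_meas hφ).pow_const 2) (C ^ 2) (fun x => by
      rw [abs_pow]; exact pow_le_pow_left₀ (abs_nonneg _) (Trt_bdd C hb x) 2)
  · exact integrable_of_bdd (Trt_meas hφ2) (C ^ 2) (Trt_bdd (C ^ 2) hb2)
  · intro x
    exact sq_integral_le α (hφ.comp (measurable_const_mul x)) C (fun y => hb _)
end Star

section Star2
variable {G : Type*} [Group G] [MeasurableSpace G] [MeasurableMul₂ G] [MeasurableInv G]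

lemma Trt_indicator {α : Measure G} [IsProbabilityMeasure α] {B : Set G} (hB : MeasurableSet B)
    (x : G) : Trt α (B.indicator 1) x = (α ((fun y => x * y) ⁻¹' B)).toReal := by
  have h : (fun y => (B.indicator (1 : G → ℝ)) (x * y))
      = ((fun y => x * y) ⁻¹' B).indicator 1 := by
    funext y
    by_cases h : x * y ∈ B <;> simp [Set.indicator_apply, h]
  simp only [Trt]
  rw [h, integral_indicator_one ((measurable_const_mul x) hB), measureReal_def]

lemma star {p g : Measure G} [IsProbabilityMeasure p] [IsProbabilityMeasure g]
    (hgg : mconv g g = g) (hpg : mconv p g = p) (hgp : mconv g p = g) :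
    p = g := by
  have main : ∀ B : Set G, MeasurableSet B →
      ∀ᵐ x ∂g, p ((fun y => x * y) ⁻¹' B) = g ((fun y => x * y) ⁻¹' B) := by
    intro B hB
    set u : G → ℝ := B.indicator 1 with hu
    have hum : Measurable u := measurable_one.indicator hB
    have hub : ∀ x, |u x| ≤ 1 := fun x => by
      by_cases h : x ∈ B <;> simp [hu, Set.indicator_apply, h]
    have hpm : Measurable (Trt p u) := Trt_meas hum
    have hgm : Measurable (Trt g u) := Trt_meas hum
    have hpb : ∀ x, |Trt p u x| ≤ 1 := Trt_bdd 1 hub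
    have hgb : ∀ x, |Trt g u x| ≤ 1 := Trt_bdd 1 hub
    have e_gp : Trt g (Trt p u) = Trt g u := by
      rw [Trt_comp hum 1 hub, hgp]
    have e_pg : Trt p (Trt g u) = Trt p u := by
      rw [Trt_comp hum 1 hub, hpg]
    have e_gg : Trt g (Trt g u) = Trt g u := by
      rw [Trt_comp hum 1 hub, hgg]
    -- norms
    have c1 : ∫ x, (Trt g u x) ^ 2 ∂g ≤ ∫ x, (Trt p u x) ^ 2 ∂g := by
      have h := Trt_contraction (α := g) hgg hpm 1 hpb
      rwa [e_gp] at h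
    have c2 : ∫ x, (Trt p u x) ^ 2 ∂g ≤ ∫ x, (Trt g u x) ^ 2 ∂g := by
      have h := Trt_contraction (α := p) hgp hgm 1 hgb
      rwa [e_pg] at h
    have hN : ∫ x, (Trt p u x) ^ 2 ∂g = ∫ x, (Trt g u x) ^ 2 ∂g := le_antisymm c2 c1
    -- the sum function
    have e_add : Trt g (fun x => Trt p u x + Trt g u x) = fun x => 2 * Trt g u x := by
      funext x
      have i1 : Integrable (fun y => Trt p u (x * y)) g :=
        integrable_of_bdd (hpm.comp (measurable_const_mul x)) 1 (fun y => hpb _)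
      have i2 : Integrable (fun y => Trt g u (x * y)) g :=
        integrable_of_bdd (hgm.comp (measurable_const_mul x)) 1 (fun y => hgb _)
      have : Trt g (fun x => Trt p u x + Trt g u x) x
          = Trt g (Trt p u) x + Trt g (Trt g u) x := by
        simp only [Trt]
        exact integral_add i1 i2
      rw [this, e_gp, e_gg]
      ring
    have c3 : ∫ x, (2 * Trt g u x) ^ 2 ∂g
        ≤ ∫ x, (Trt p u x + Trt g u x) ^ 2 ∂g := by
      have h := Trt_contraction (α := g) (φ := fun x => Trt p u x + Trt g u x) hgg (hpm.add hgm) 2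
        (fun x => (abs_add_le _ _).trans (by linarith [hpb x, hgb x]))
      rwa [e_add] at h
    -- integrability for expansions
    have ip2 : Integrable (fun x => (Trt p u x) ^ 2) g :=
      integrable_of_bdd (hpm.pow_const 2) 1 (fun x => by
        rw [abs_pow]; simpa using pow_le_pow_left₀ (abs_nonneg _) (hpb x) 2)
    have ig2 : Integrable (fun x => (Trt g u x) ^ 2) g :=
      integrable_of_bdd (hgm.pow_const 2) 1 (fun x => by
        rw [abs_pow]; simpa using pow_le_pow_left₀ (abs_nonneg _) (hgb x) 2)
    have ipg : Integrable (fun x => Trt p u x * Trt g u x) g :=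
      integrable_of_bdd (hpm.mul hgm) 1 (fun x => by
        rw [abs_mul]
        calc |Trt p u x| * |Trt g u x| ≤ 1 * 1 :=
          mul_le_mul (hpb x) (hgb x) (abs_nonneg _) zero_le_one
        _ = 1 := by ring)
    set N : ℝ := ∫ x, (Trt g u x) ^ 2 ∂g with hNdef
    set I : ℝ := ∫ x, Trt p u x * Trt g u x ∂g with hIdef
    have exp1 : ∫ x, (2 * Trt g u x) ^ 2 ∂g = 4 * N := by
      have h : (fun x => (2 * Trt g u x) ^ 2) = fun x => 4 * (Trt g u x) ^ 2 := by
        funext x; ring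
      rw [h, MeasureTheory.integral_const_mul]
    have exp2 : ∫ x, (Trt p u x + Trt g u x) ^ 2 ∂g = N + 2 * I + N := by
      have h : (fun x => (Trt p u x + Trt g u x) ^ 2)
          = fun x => ((Trt p u x) ^ 2 + 2 * (Trt p u x * Trt g u x)) + (Trt g u x) ^ 2 := by
        funext x; ring
      have iA : Integrable (fun x => Trt p u x ^ 2 + 2 * (Trt p u x * Trt g u x)) g :=
        ip2.add (ipg.const_mul 2)
      have iB : Integrable (fun x => 2 * (Trt p u x * Trt g u x)) g := ipg.const_mul 2
      rw [h, integral_add iA ig2, integral_add ip2 iB, MeasureTheory.integral_const_mul]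
      rw [hN]
      try ring
    have hNI : N ≤ I := by
      rw [exp1, exp2] at c3
      linarith
    have exp3 : ∫ x, (Trt p u x - Trt g u x) ^ 2 ∂g = 2 * N - 2 * I := by
      have h : (fun x => (Trt p u x - Trt g u x) ^ 2)
          = fun x => ((Trt p u x) ^ 2 - 2 * (Trt p u x * Trt g u x)) + (Trt g u x) ^ 2 := by
        funext x; ring
      have iA : Integrable (fun x => Trt p u x ^ 2 - 2 * (Trt p u x * Trt g u x)) g :=
        ip2.sub (ipg.const_mul 2)
      have iB : Integrable (fun x => 2 * (Trt p u x * Trt g u x)) g := ipg.const_mul 2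
      rw [h, integral_add iA ig2, integral_sub ip2 iB, MeasureTheory.integral_const_mul]
      rw [hN]
      try ring
    have hz : ∫ x, (Trt p u x - Trt g u x) ^ 2 ∂g = 0 := by
      have hnn : 0 ≤ ∫ x, (Trt p u x - Trt g u x) ^ 2 ∂g :=
        integral_nonneg (fun x => sq_nonneg _)
      rw [exp3]
      linarith
    have iae : (fun x => (Trt p u x - Trt g u x) ^ 2) =ᵐ[g] 0 := by
      refine (integral_eq_zero_iff_of_nonneg (fun x => sq_nonneg _) ?_).mp hz
      exact integrable_of_bdd ((hpm.sub hgm).pow_const 2) 4 (fun x => by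
        rw [abs_pow]
        have : |Trt p u x - Trt g u x| ≤ 2 := (abs_sub _ _).trans (by linarith [hpb x, hgb x])
        calc |Trt p u x - Trt g u x| ^ 2 ≤ 2 ^ 2 := pow_le_pow_left₀ (abs_nonneg _) this 2
          _ = 4 := by norm_num)
    filter_upwards [iae] with x hx
    have hx' : Trt p u x = Trt g u x := by
      have := sub_eq_zero.mp (pow_eq_zero_iff (n := 2) (by norm_num) |>.mp hx)
      linarith [this]
    rw [Trt_indicator hB x, Trt_indicator hB x] at hx'
    exact (ENNReal.toReal_eq_toReal_iff' (measure_ne_top _ _) (measure_ne_top _ _)).mp hx'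
  -- extraction of the measure identity
  have hΦ : Measurable (fun z : G × G => (z.1, z.1 * z.2)) :=
    measurable_fst.prodMk measurable_mul
  have rect : ∀ (q : Measure G) [IsProbabilityMeasure q], ∀ {A B : Set G},
      MeasurableSet A → MeasurableSet B →
      (Measure.map (fun z : G × G => (z.1, z.1 * z.2)) (g.prod q)) (A ×ˢ B)
        = ∫⁻ x in A, q ((fun y => x * y) ⁻¹' B) ∂g := by
    intro q hq A B hA hB
    rw [Measure.map_apply hΦ (hA.prod hB), Measure.prod_apply (hΦ (hA.prod hB))]
    have h : ∀ x, q (Prod.mk x ⁻¹' ((fun z : G × G => (z.1, z.1 * z.2)) ⁻¹' (A ×ˢ B)))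
        = A.indicator (fun x => q ((fun y => x * y) ⁻¹' B)) x := by
      intro x
      by_cases hx : x ∈ A
      · rw [Set.indicator_of_mem hx]
        congr 1
        ext y
        simp [hx]
      · rw [Set.indicator_of_notMem hx]
        have : (Prod.mk x ⁻¹' ((fun z : G × G => (z.1, z.1 * z.2)) ⁻¹' (A ×ˢ B))) = ∅ := by
          ext y; simp [hx]
        simp [this]
    simp_rw [h]
    rw [lintegral_indicator hA]
  have m12 : Measure.map (fun z : G × G => (z.1, z.1 * z.2)) (g.prod p)
      = Measure.map (fun z : G × G => (z.1, z.1 * z.2)) (g.prod g) := by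
    haveI : IsProbabilityMeasure (Measure.map (fun z : G × G => (z.1, z.1 * z.2)) (g.prod p)) :=
      Measure.isProbabilityMeasure_map hΦ.aemeasurable
    haveI : IsProbabilityMeasure (Measure.map (fun z : G × G => (z.1, z.1 * z.2)) (g.prod g)) :=
      Measure.isProbabilityMeasure_map hΦ.aemeasurable
    refine ext_of_generate_finite _ generateFrom_prod.symm isPiSystem_prod ?_ ?_
    · rintro s ⟨A, hA, B, hB, rfl⟩
      rw [rect p hA hB, rect g hA hB]
      refine lintegral_congr_ae (ae_restrict_of_ae ?_)
      filter_upwards [main B hB] with x hx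
      rw [hx]
    · simp
  have hψ : Measurable (fun z : G × G => z.1⁻¹ * z.2) := measurable_fst.inv.mul measurable_snd
  have recover : ∀ (q : Measure G) [IsProbabilityMeasure q],
      Measure.map (fun z : G × G => z.1⁻¹ * z.2)
        (Measure.map (fun z : G × G => (z.1, z.1 * z.2)) (g.prod q)) = q := by
    intro q hq
    rw [Measure.map_map hψ hΦ]
    have h : ((fun z : G × G => z.1⁻¹ * z.2) ∘ (fun z : G × G => (z.1, z.1 * z.2)))
        = Prod.snd := by
      funext z; simp
    rw [h, Measure.map_snd_prod]
    simp
  calc p = Measure.map (fun z : G × G => z.1⁻¹ * z.2)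
        (Measure.map (fun z : G × G => (z.1, z.1 * z.2)) (g.prod p)) := (recover p).symm
    _ = Measure.map (fun z : G × G => z.1⁻¹ * z.2)
        (Measure.map (fun z : G × G => (z.1, z.1 * z.2)) (g.prod g)) := by rw [m12]
    _ = g := recover g

end Star2

section Star3
variable {G : Type*} [Group G] [MeasurableSpace G] [MeasurableMul₂ G] [MeasurableInv G]

/-- The left-translation averaging operator. -/
noncomputable def Tlt (α : Measure G) (φ : G → ℝ) : G → ℝ := fun x => ∫ y, φ (y * x) ∂α

lemma Tlt_meas {α : Measure G} [SFinite α] {φ : G → ℝ} (hφ : Measurable φ) :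
    Measurable (Tlt α φ) := by
  have : StronglyMeasurable (fun z : G × G => φ (z.2 * z.1)) :=
    (hφ.comp (measurable_snd.mul measurable_fst)).stronglyMeasurable
  exact this.integral_prod_right'.measurable

lemma Tlt_bdd {α : Measure G} [IsProbabilityMeasure α] {φ : G → ℝ} (C : ℝ)
    (hb : ∀ x, |φ x| ≤ C) : ∀ x, |Tlt α φ x| ≤ C := by
  intro x
  have h := norm_integral_le_of_norm_le_const (μ := α) (f := fun y => φ (y * x)) (C := C)
    (Filter.Eventually.of_forall fun y => by rw [Real.norm_eq_abs]; exact hb _)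
  rw [Real.norm_eq_abs] at h
  simpa [Tlt] using h

lemma Tlt_comp {α β : Measure G} [IsProbabilityMeasure α] [IsProbabilityMeasure β]
    {φ : G → ℝ} (hφ : Measurable φ) (C : ℝ) (hb : ∀ x, |φ x| ≤ C) :
    Tlt α (Tlt β φ) = Tlt (mconv β α) φ := by
  funext x
  have h := integral_mconv' (μ := β) (ν := α) (f := fun w => φ (w * x))
    (hφ.comp (measurable_mul_const x)) C (fun w => hb _)
  simp only [Tlt, h]
  congr 1; funext y; congr 1; funext z; rw [mul_assoc]

lemma Tlt_contraction {α g : Measure G} [IsProbabilityMeasure α] [IsProbabilityMeasure g]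
    (h : mconv α g = g) {φ : G → ℝ} (hφ : Measurable φ) (C : ℝ) (hb : ∀ x, |φ x| ≤ C) :
    ∫ x, (Tlt α φ x) ^ 2 ∂g ≤ ∫ x, (φ x) ^ 2 ∂g := by
  have hφ2 : Measurable fun x => (φ x) ^ 2 := hφ.pow_const 2
  have hb2 : ∀ x, |(φ x) ^ 2| ≤ C ^ 2 := fun x => by
    rw [abs_pow]; exact pow_le_pow_left₀ (abs_nonneg _) (hb x) 2
  have key : ∫ z, (φ z) ^ 2 ∂(mconv α g) = ∫ x, Tlt α (fun z => (φ z) ^ 2) x ∂g :=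
    integral_mconv' hφ2 (C ^ 2) hb2
  rw [h] at key
  rw [key]
  apply integral_mono
  · exact integrable_of_bdd ((Tlt_meas hφ).pow_const 2) (C ^ 2) (fun x => by
      rw [abs_pow]; exact pow_le_pow_left₀ (abs_nonneg _) (Tlt_bdd C hb x) 2)
  · exact integrable_of_bdd (Tlt_meas hφ2) (C ^ 2) (Tlt_bdd (C ^ 2) hb2)
  · intro x
    exact sq_integral_le α (hφ.comp (measurable_mul_const x)) C (fun y => hb _)

lemma Tlt_indicator {α : Measure G} [IsProbabilityMeasure α] {B : Set G} (hB : MeasurableSet B)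
    (x : G) : Tlt α (B.indicator 1) x = (α ((fun y => y * x) ⁻¹' B)).toReal := by
  have h : (fun y => (B.indicator (1 : G → ℝ)) (y * x))
      = ((fun y => y * x) ⁻¹' B).indicator 1 := by
    funext y
    by_cases h : y * x ∈ B <;> simp [Set.indicator_apply, h]
  simp only [Tlt]
  rw [h, integral_indicator_one ((measurable_mul_const x) hB), measureReal_def]

lemma star' {p g : Measure G} [IsProbabilityMeasure p] [IsProbabilityMeasure g]
    (hgg : mconv g g = g) (hpg : mconv p g = g) (hgp : mconv g p = p) :
    p = g := by
  have main : ∀ B : Set G, MeasurableSet B →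
      ∀ᵐ x ∂g, p ((fun y => y * x) ⁻¹' B) = g ((fun y => y * x) ⁻¹' B) := by
    intro B hB
    set u : G → ℝ := B.indicator 1 with hu
    have hum : Measurable u := measurable_one.indicator hB
    have hub : ∀ x, |u x| ≤ 1 := fun x => by
      by_cases h : x ∈ B <;> simp [hu, Set.indicator_apply, h]
    have hpm : Measurable (Tlt p u) := Tlt_meas hum
    have hgm : Measurable (Tlt g u) := Tlt_meas hum
    have hpb : ∀ x, |Tlt p u x| ≤ 1 := Tlt_bdd 1 hub
    have hgb : ∀ x, |Tlt g u x| ≤ 1 := Tlt_bdd 1 hub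
    have e_gp : Tlt g (Tlt p u) = Tlt g u := by
      rw [Tlt_comp hum 1 hub, hpg]
    have e_pg : Tlt p (Tlt g u) = Tlt p u := by
      rw [Tlt_comp hum 1 hub, hgp]
    have e_gg : Tlt g (Tlt g u) = Tlt g u := by
      rw [Tlt_comp hum 1 hub, hgg]
    have c1 : ∫ x, (Tlt g u x) ^ 2 ∂g ≤ ∫ x, (Tlt p u x) ^ 2 ∂g := by
      have h := Tlt_contraction (α := g) hgg hpm 1 hpb
      rwa [e_gp] at h
    have c2 : ∫ x, (Tlt p u x) ^ 2 ∂g ≤ ∫ x, (Tlt g u x) ^ 2 ∂g := by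
      have h := Tlt_contraction (α := p) hpg hgm 1 hgb
      rwa [e_pg] at h
    have hN : ∫ x, (Tlt p u x) ^ 2 ∂g = ∫ x, (Tlt g u x) ^ 2 ∂g := le_antisymm c2 c1
    have e_add : Tlt g (fun x => Tlt p u x + Tlt g u x) = fun x => 2 * Tlt g u x := by
      funext x
      have i1 : Integrable (fun y => Tlt p u (y * x)) g :=
        integrable_of_bdd (hpm.comp (measurable_mul_const x)) 1 (fun y => hpb _)
      have i2 : Integrable (fun y => Tlt g u (y * x)) g :=
        integrable_of_bdd (hgm.comp (measurable_mul_const x)) 1 (fun y => hgb _)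
      have h : Tlt g (fun x => Tlt p u x + Tlt g u x) x
          = Tlt g (Tlt p u) x + Tlt g (Tlt g u) x := by
        simp only [Tlt]
        exact integral_add i1 i2
      rw [h, e_gp, e_gg]
      ring
    have c3 : ∫ x, (2 * Tlt g u x) ^ 2 ∂g
        ≤ ∫ x, (Tlt p u x + Tlt g u x) ^ 2 ∂g := by
      have h := Tlt_contraction (α := g) (φ := fun x => Tlt p u x + Tlt g u x) hgg (hpm.add hgm) 2
        (fun x => (abs_add_le _ _).trans (by linarith [hpb x, hgb x]))
      rwa [e_add] at h
    have ip2 : Integrable (fun x => (Tlt p u x) ^ 2) g :=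
      integrable_of_bdd (hpm.pow_const 2) 1 (fun x => by
        rw [abs_pow]; simpa using pow_le_pow_left₀ (abs_nonneg _) (hpb x) 2)
    have ig2 : Integrable (fun x => (Tlt g u x) ^ 2) g :=
      integrable_of_bdd (hgm.pow_const 2) 1 (fun x => by
        rw [abs_pow]; simpa using pow_le_pow_left₀ (abs_nonneg _) (hgb x) 2)
    have ipg : Integrable (fun x => Tlt p u x * Tlt g u x) g :=
      integrable_of_bdd (hpm.mul hgm) 1 (fun x => by
        rw [abs_mul]
        calc |Tlt p u x| * |Tlt g u x| ≤ 1 * 1 :=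
          mul_le_mul (hpb x) (hgb x) (abs_nonneg _) zero_le_one
        _ = 1 := by ring)
    set N : ℝ := ∫ x, (Tlt g u x) ^ 2 ∂g with hNdef
    set I : ℝ := ∫ x, Tlt p u x * Tlt g u x ∂g with hIdef
    have exp1 : ∫ x, (2 * Tlt g u x) ^ 2 ∂g = 4 * N := by
      have h : (fun x => (2 * Tlt g u x) ^ 2) = fun x => 4 * (Tlt g u x) ^ 2 := by
        funext x; ring
      rw [h, MeasureTheory.integral_const_mul]
    have exp2 : ∫ x, (Tlt p u x + Tlt g u x) ^ 2 ∂g = N + 2 * I + N := by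
      have h : (fun x => (Tlt p u x + Tlt g u x) ^ 2)
          = fun x => ((Tlt p u x) ^ 2 + 2 * (Tlt p u x * Tlt g u x)) + (Tlt g u x) ^ 2 := by
        funext x; ring
      have iA : Integrable (fun x => Tlt p u x ^ 2 + 2 * (Tlt p u x * Tlt g u x)) g :=
        ip2.add (ipg.const_mul 2)
      have iB : Integrable (fun x => 2 * (Tlt p u x * Tlt g u x)) g := ipg.const_mul 2
      rw [h, integral_add iA ig2, integral_add ip2 iB, MeasureTheory.integral_const_mul]
      rw [hN]
      try ring
    have hNI : N ≤ I := by
      rw [exp1, exp2] at c3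
      linarith
    have exp3 : ∫ x, (Tlt p u x - Tlt g u x) ^ 2 ∂g = 2 * N - 2 * I := by
      have h : (fun x => (Tlt p u x - Tlt g u x) ^ 2)
          = fun x => ((Tlt p u x) ^ 2 - 2 * (Tlt p u x * Tlt g u x)) + (Tlt g u x) ^ 2 := by
        funext x; ring
      have iA : Integrable (fun x => Tlt p u x ^ 2 - 2 * (Tlt p u x * Tlt g u x)) g :=
        ip2.sub (ipg.const_mul 2)
      have iB : Integrable (fun x => 2 * (Tlt p u x * Tlt g u x)) g := ipg.const_mul 2
      rw [h, integral_add iA ig2, integral_sub ip2 iB, MeasureTheory.integral_const_mul]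
      rw [hN]
      try ring
    have hz : ∫ x, (Tlt p u x - Tlt g u x) ^ 2 ∂g = 0 := by
      have hnn : 0 ≤ ∫ x, (Tlt p u x - Tlt g u x) ^ 2 ∂g :=
        integral_nonneg (fun x => sq_nonneg _)
      rw [exp3]
      linarith
    have iae : (fun x => (Tlt p u x - Tlt g u x) ^ 2) =ᵐ[g] 0 := by
      refine (integral_eq_zero_iff_of_nonneg (fun x => sq_nonneg _) ?_).mp hz
      exact integrable_of_bdd ((hpm.sub hgm).pow_const 2) 4 (fun x => by
        rw [abs_pow]
        have h2 : |Tlt p u x - Tlt g u x| ≤ 2 := (abs_sub _ _).trans (by linarith [hpb x, hgb x])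
        calc |Tlt p u x - Tlt g u x| ^ 2 ≤ 2 ^ 2 := pow_le_pow_left₀ (abs_nonneg _) h2 2
          _ = 4 := by norm_num)
    filter_upwards [iae] with x hx
    have hx' : Tlt p u x = Tlt g u x := by
      have h := sub_eq_zero.mp (pow_eq_zero_iff (n := 2) (by norm_num) |>.mp hx)
      linarith [h]
    rw [Tlt_indicator hB x, Tlt_indicator hB x] at hx'
    exact (ENNReal.toReal_eq_toReal_iff' (measure_ne_top _ _) (measure_ne_top _ _)).mp hx'
  -- extraction
  have hΦ : Measurable (fun z : G × G => (z.1, z.2 * z.1)) :=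
    measurable_fst.prodMk (measurable_snd.mul measurable_fst)
  have rect : ∀ (q : Measure G) [IsProbabilityMeasure q], ∀ {A B : Set G},
      MeasurableSet A → MeasurableSet B →
      (Measure.map (fun z : G × G => (z.1, z.2 * z.1)) (g.prod q)) (A ×ˢ B)
        = ∫⁻ x in A, q ((fun y => y * x) ⁻¹' B) ∂g := by
    intro q hq A B hA hB
    rw [Measure.map_apply hΦ (hA.prod hB), Measure.prod_apply (hΦ (hA.prod hB))]
    have h : ∀ x, q (Prod.mk x ⁻¹' ((fun z : G × G => (z.1, z.2 * z.1)) ⁻¹' (A ×ˢ B)))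
        = A.indicator (fun x => q ((fun y => y * x) ⁻¹' B)) x := by
      intro x
      by_cases hx : x ∈ A
      · rw [Set.indicator_of_mem hx]
        congr 1
        ext y
        simp [hx]
      · rw [Set.indicator_of_notMem hx]
        have he : (Prod.mk x ⁻¹' ((fun z : G × G => (z.1, z.2 * z.1)) ⁻¹' (A ×ˢ B))) = ∅ := by
          ext y; simp [hx]
        simp [he]
    simp_rw [h]
    rw [lintegral_indicator hA]
  have m12 : Measure.map (fun z : G × G => (z.1, z.2 * z.1)) (g.prod p)
      = Measure.map (fun z : G × G => (z.1, z.2 * z.1)) (g.prod g) := by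
    haveI : IsProbabilityMeasure (Measure.map (fun z : G × G => (z.1, z.2 * z.1)) (g.prod p)) :=
      Measure.isProbabilityMeasure_map hΦ.aemeasurable
    haveI : IsProbabilityMeasure (Measure.map (fun z : G × G => (z.1, z.2 * z.1)) (g.prod g)) :=
      Measure.isProbabilityMeasure_map hΦ.aemeasurable
    refine ext_of_generate_finite _ generateFrom_prod.symm isPiSystem_prod ?_ ?_
    · rintro s ⟨A, hA, B, hB, rfl⟩
      rw [rect p hA hB, rect g hA hB]
      refine lintegral_congr_ae (ae_restrict_of_ae ?_)
      filter_upwards [main B hB] with x hx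
      rw [hx]
    · simp
  have hψ : Measurable (fun z : G × G => z.2 * z.1⁻¹) := measurable_snd.mul measurable_fst.inv
  have recover : ∀ (q : Measure G) [IsProbabilityMeasure q],
      Measure.map (fun z : G × G => z.2 * z.1⁻¹)
        (Measure.map (fun z : G × G => (z.1, z.2 * z.1)) (g.prod q)) = q := by
    intro q hq
    rw [Measure.map_map hψ hΦ]
    have h : ((fun z : G × G => z.2 * z.1⁻¹) ∘ (fun z : G × G => (z.1, z.2 * z.1)))
        = Prod.snd := by
      funext z; simp
    rw [h, Measure.map_snd_prod]
    simp
  calc p = Measure.map (fun z : G × G => z.2 * z.1⁻¹)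
        (Measure.map (fun z : G × G => (z.1, z.2 * z.1)) (g.prod p)) := (recover p).symm
    _ = Measure.map (fun z : G × G => z.2 * z.1⁻¹)
        (Measure.map (fun z : G × G => (z.1, z.2 * z.1)) (g.prod g)) := by rw [m12]
    _ = g := recover g

end Star3

section SemigroupAlg
variable {M : Type*} [Semigroup M]

private lemma tailed {a b : M} (h : a = b) (t : M) : a * t = b * t := by rw [h]

private lemma inv1 {a x : M} (hx : a * x * a = a) : a * (x * a * x) * a = a := by
  have h1 : a * (x * a * x) * a = a * x * a * (x * a) := by simp only [mul_assoc]
  rw [h1, hx, ← mul_assoc, hx]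

private lemma inv2 {a x : M} (hx : a * x * a = a) :
    (x * a * x) * a * (x * a * x) = x * a * x := by
  have h1 : (x * a * x) * a * (x * a * x) = x * (a * x * a) * (x * (a * x)) := by
    simp only [mul_assoc]
  rw [h1, hx]
  have h2 : x * a * (x * (a * x)) = x * (a * x * a) * x := by simp only [mul_assoc]
  rw [h2, hx]

lemma idem_of_mul_idem
    (hstar : ∀ p g : M, g * g = g → p * g = p → g * p = g → p = g)
    (hstar' : ∀ p g : M, g * g = g → p * g = g → g * p = p → p = g)
    {e f : M} (he : e * e = e) (hf : f * f = f)
    (hx : ∃ x : M, (e * f) * x * (e * f) = e * f) :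
    (e * f) * (e * f) = e * f := by
  obtain ⟨x, hx⟩ := hx
  obtain ⟨w, h1, h2⟩ : ∃ w : M, (e * f) * w * (e * f) = e * f ∧ w * (e * f) * w = w :=
    ⟨x * (e * f) * x, inv1 hx, inv2 hx⟩
  have het : ∀ t : M, e * (e * t) = e * t := fun t => by rw [← mul_assoc, he]
  have hft : ∀ t : M, f * (f * t) = f * t := fun t => by rw [← mul_assoc, hf]
  have h1n : e * (f * (w * (e * f))) = e * f := by
    simpa only [mul_assoc] using h1
  have h2n : w * (e * (f * w)) = w := by
    simpa only [mul_assoc] using h2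
  have H1t : ∀ t : M, e * (f * (w * (e * (f * t)))) = e * (f * t) := fun t => by
    simpa only [mul_assoc] using tailed h1 t
  have H2t : ∀ t : M, w * (e * (f * (w * t))) = w * t := fun t => by
    simpa only [mul_assoc] using tailed h2 t
  -- g := f * w * e
  have hgg : (f * w * e) * (f * w * e) = f * w * e := by
    simp only [mul_assoc, het, hft, H1t, H2t, h1n, h2n]
  have hgag : (f * w * e) * (e * f) * (f * w * e) = f * w * e := by
    simp only [mul_assoc, het, hft, H1t, H2t, h1n, h2n]
  have haga : (e * f) * (f * w * e) * (e * f) = e * f := by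
    simp only [mul_assoc, het, hft, H1t, H2t, h1n, h2n]
  have hag : (e * f) * (f * w * e) = f * w * e := by
    refine hstar ((e * f) * (f * w * e)) (f * w * e) hgg ?_ ?_
    · simp only [mul_assoc, het, hft, H1t, H2t, h1n, h2n]
    · simp only [mul_assoc, het, hft, H1t, H2t, h1n, h2n]
  have hga : (f * w * e) * (e * f) = f * w * e := by
    refine hstar' ((f * w * e) * (e * f)) (f * w * e) hgg ?_ ?_
    · simp only [mul_assoc, het, hft, H1t, H2t, h1n, h2n]
    · simp only [mul_assoc, het, hft, H1t, H2t, h1n, h2n]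
  have key : e * f = f * w * e := by
    calc e * f = (e * f) * (f * w * e) * (e * f) := haga.symm
      _ = (f * w * e) * (e * f) := by rw [hag]
      _ = f * w * e := hga
  rw [key]
  exact hgg

lemma idem_comm
    (hstar : ∀ p g : M, g * g = g → p * g = p → g * p = g → p = g)
    (hstar' : ∀ p g : M, g * g = g → p * g = g → g * p = p → p = g)
    (hreg : ∀ a : M, ∃ x : M, a * x * a = a)
    {e f : M} (he : e * e = e) (hf : f * f = f) :
    e * f = f * e := by
  have hP : (e * f) * (e * f) = e * f := idem_of_mul_idem hstar hstar' he hf (hreg (e * f))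
  have hQ : (f * e) * (f * e) = f * e := idem_of_mul_idem hstar hstar' hf he (hreg (f * e))
  have het : ∀ t : M, e * (e * t) = e * t := fun t => by rw [← mul_assoc, he]
  have hft : ∀ t : M, f * (f * t) = f * t := fun t => by rw [← mul_assoc, hf]
  have hPn : e * (f * (e * f)) = e * f := by simpa only [mul_assoc] using hP
  have hQn : f * (e * (f * e)) = f * e := by simpa only [mul_assoc] using hQ
  have hPt : ∀ t : M, e * (f * (e * (f * t))) = e * (f * t) := fun t => by
    simpa only [mul_assoc] using tailed hP t
  have hQt : ∀ t : M, f * (e * (f * (e * t))) = f * (e * t) := fun t => by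
    simpa only [mul_assoc] using tailed hQ t
  -- r := e * (f * e)
  have hrr : (e * (f * e)) * (e * (f * e)) = e * (f * e) := by
    simp only [mul_assoc, het, hft, hPn, hQn, hPt, hQt]
  have h1 : e * f = e * (f * e) := by
    refine hstar' (e * f) (e * (f * e)) hrr ?_ ?_
    · simp only [mul_assoc, het, hft, hPn, hQn, hPt, hQt]
    · simp only [mul_assoc, het, hft, hPn, hQn, hPt, hQt]
  have h2 : f * e = e * (f * e) := by
    refine hstar (f * e) (e * (f * e)) hrr ?_ ?_
    · simp only [mul_assoc, het, hft, hPn, hQn, hPt, hQt]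
    · simp only [mul_assoc, het, hft, hPn, hQn, hPt, hQt]
  exact h1.trans h2.symm

lemma semigroup_unique_inverse
    (hstar : ∀ p g : M, g * g = g → p * g = p → g * p = g → p = g)
    (hstar' : ∀ p g : M, g * g = g → p * g = g → g * p = p → p = g)
    (hreg : ∀ a : M, ∃ x : M, a * x * a = a)
    (μ : M) : ∃! ν : M, μ * ν * μ = μ ∧ ν * μ * ν = ν := by
  obtain ⟨x, hx⟩ := hreg μ
  refine ⟨x * μ * x, ⟨inv1 hx, inv2 hx⟩, ?_⟩
  rintro ν ⟨hν1, hν2⟩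
  have hν'1 : μ * (x * μ * x) * μ = μ := inv1 hx
  have hν'2 : (x * μ * x) * μ * (x * μ * x) = x * μ * x := inv2 hx
  set ν' := x * μ * x with hν'def
  clear_value ν'
  clear hx
  -- tailed versions
  have hν1t : ∀ t : M, μ * (ν * (μ * t)) = μ * t := fun t => by
    simpa only [mul_assoc] using tailed hν1 t
  have hν2t : ∀ t : M, ν * (μ * (ν * t)) = ν * t := fun t => by
    simpa only [mul_assoc] using tailed hν2 t
  have hν'1t : ∀ t : M, μ * (ν' * (μ * t)) = μ * t := fun t => by
    simpa only [mul_assoc] using tailed hν'1 t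
  have hν'2t : ∀ t : M, ν' * (μ * (ν' * t)) = ν' * t := fun t => by
    simpa only [mul_assoc] using tailed hν'2 t
  -- idempotents
  have i1 : (ν * μ) * (ν * μ) = ν * μ := by simp only [mul_assoc, hν2t]
  have i2 : (ν' * μ) * (ν' * μ) = ν' * μ := by simp only [mul_assoc, hν'2t]
  have i3 : (μ * ν) * (μ * ν) = μ * ν := by simp only [mul_assoc, hν1t]
  have i4 : (μ * ν') * (μ * ν') = μ * ν' := by simp only [mul_assoc, hν'1t]
  have comm1 : (ν * μ) * (ν' * μ) = (ν' * μ) * (ν * μ) :=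
    idem_comm hstar hstar' hreg i1 i2
  have comm2 : (μ * ν) * (μ * ν') = (μ * ν') * (μ * ν) :=
    idem_comm hstar hstar' hreg i3 i4
  have key1 : ν = ν' * (μ * ν) := by
    calc ν = ν * μ * ν := hν2.symm
      _ = ν * (μ * ν' * μ) * ν := by rw [hν'1]
      _ = ((ν * μ) * (ν' * μ)) * ν := by simp only [mul_assoc]
      _ = ((ν' * μ) * (ν * μ)) * ν := tailed comm1 ν
      _ = ν' * (μ * (ν * (μ * ν))) := by simp only [mul_assoc]
      _ = ν' * (μ * ν) := by rw [hν1t]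
  have key2 : ν' = ν' * (μ * ν) := by
    calc ν' = ν' * μ * ν' := hν'2.symm
      _ = ν' * (μ * ν * μ) * ν' := by rw [hν1]
      _ = ν' * ((μ * ν) * (μ * ν')) := by simp only [mul_assoc]
      _ = ν' * ((μ * ν') * (μ * ν)) := by rw [comm2]
      _ = ν' * (μ * (ν' * (μ * ν))) := by simp only [mul_assoc]
      _ = ν' * (μ * ν) := hν'2t (μ * ν)
  exact key1.trans key2.symm
end SemigroupAlg

/-- A regular subsemigroup of the convolution semigroup of Radon probability measures on a
Hausdorff topological group is an inverse semigroup: inverses are unique and idempotents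
commute. -/
theorem regular_convolution_subsemigroup_is_inverse {G : Type*} [Group G] [TopologicalSpace G]
    [IsTopologicalGroup G] [T2Space G] [MeasurableSpace G] [BorelSpace G] [MeasurableMul₂ G]
    {S : Set (Measure G)} (hradon : ∀ μ ∈ S, IsRadonProb μ)
    (hmul : ∀ μ ∈ S, ∀ ν ∈ S, mconv μ ν ∈ S)
    (hreg : ∀ μ ∈ S, ∃ ν ∈ S, mconv (mconv μ ν) μ = μ) :
    (∀ μ ∈ S, ∃! ν, ν ∈ S ∧ mconv (mconv μ ν) μ = μ ∧ mconv (mconv ν μ) ν = ν) ∧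
      ∀ e ∈ S, ∀ f ∈ S, mconv e e = e → mconv f f = f → mconv e f = mconv f e := by
  haveI : MeasurableInv G := ⟨continuous_inv.measurable⟩
  have hprob : ∀ μ ∈ S, IsProbabilityMeasure μ := fun μ hμ => ⟨(hradon μ hμ).1⟩
  letI instMulM : Mul {μ : Measure G // μ ∈ S} :=
    ⟨fun a b => ⟨mconv a.1 b.1, hmul a.1 a.2 b.1 b.2⟩⟩
  letI instSemigroupM : Semigroup {μ : Measure G // μ ∈ S} :=
    { mul_assoc := fun a b c => by
        haveI := hprob a.1 a.2; haveI := hprob b.1 b.2; haveI := hprob c.1 c.2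
        exact Subtype.ext (mconv_assoc a.1 b.1 c.1) }
  have hstar : ∀ p g : {μ : Measure G // μ ∈ S}, g * g = g → p * g = p → g * p = g → p = g := by
    intro p g hgg hpg hgp
    haveI := hprob p.1 p.2; haveI := hprob g.1 g.2
    exact Subtype.ext (star (congrArg Subtype.val hgg) (congrArg Subtype.val hpg)
      (congrArg Subtype.val hgp))
  have hstar' : ∀ p g : {μ : Measure G // μ ∈ S}, g * g = g → p * g = g → g * p = p → p = g := by
    intro p g hgg hpg hgp
    haveI := hprob p.1 p.2; haveI := hprob g.1 g.2
    exact Subtype.ext (star' (congrArg Subtype.val hgg) (congrArg Subtype.val hpg)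
      (congrArg Subtype.val hgp))
  have hregM : ∀ a : {μ : Measure G // μ ∈ S}, ∃ x, a * x * a = a := by
    intro a
    obtain ⟨ν, hνS, hν⟩ := hreg a.1 a.2
    exact ⟨⟨ν, hνS⟩, Subtype.ext hν⟩
  constructor
  · intro μ hμ
    obtain ⟨ν, ⟨hν1, hν2⟩, huniq⟩ := semigroup_unique_inverse hstar hstar' hregM ⟨μ, hμ⟩
    refine ⟨ν.1, ⟨ν.2, congrArg Subtype.val hν1, congrArg Subtype.val hν2⟩, ?_⟩
    rintro ρ ⟨hρS, hρ1, hρ2⟩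
    exact congrArg Subtype.val (huniq ⟨ρ, hρS⟩ ⟨Subtype.ext hρ1, Subtype.ext hρ2⟩)
  · intro e he f hf hee hff
    exact congrArg Subtype.val
      (idem_comm hstar hstar' hregM (e := ⟨e, he⟩) (f := ⟨f, hf⟩)
        (Subtype.ext hee) (Subtype.ext hff))
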